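/- Let a₋ > 0, a₊ > 0 and A, B ∈ ℝ, and let θ₁ and θ₃ each be either the identity function on ℝ or the function h. Then there exists a unique pair (ε₁, ε₃) ∈ ℝ × ℝ such that ε₃ − ε₁ = A and a₋·θ₁(ε₁) + a₊·θ₃(ε₃) = B. -/

import Mathlib

/-- The function `h` from the paper: `h ε = ε` if `ε ≥ 0`, `h ε = sinh ε` otherwise. -/
noncomputable def hFun (ε : ℝ) : ℝ := if 0 ≤ ε then ε else Real.sinh ε

lemma hFun_eq_min (ε : ℝ) : hFun ε = min ε (Real.sinh ε) := by
  unfold hFun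
  rcases le_or_gt 0 ε with h | h
  · rw [if_pos h, min_eq_left (Real.self_le_sinh_iff.mpr h)]
  · rw [if_neg (not_le.mpr h), min_eq_right (Real.sinh_le_self_iff.mpr h.le)]

lemma hFun_strictMono : StrictMono hFun := by
  have : StrictMono fun ε : ℝ => min ε (Real.sinh ε) :=
    fun a b hab => min_lt_min hab (Real.sinh_lt_sinh.mpr hab)
  simpa [funext hFun_eq_min] using this

lemma hFun_continuous : Continuous hFun := by
  rw [funext hFun_eq_min]
  exact continuous_id.min Real.continuous_sinh

lemma hFun_atTop : Filter.Tendsto hFun Filter.atTop Filter.atTop := by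
  apply Filter.tendsto_atTop_mono' _ (Filter.eventually_atTop.mpr ⟨0, fun x hx => ?_⟩)
    Filter.tendsto_id
  simp [hFun, hx]

lemma hFun_atBot : Filter.Tendsto hFun Filter.atBot Filter.atBot := by
  apply Filter.tendsto_atBot_mono' _ (Filter.eventually_atBot.mpr ⟨0, fun x hx => ?_⟩)
    Filter.tendsto_id
  rw [hFun_eq_min]; exact min_le_left _ _

/-- Proposition 3.1 (Prop. `prop:RP`): for any choice of θ₁, θ₃ ∈ {id, h}, any a₋, a₊ > 0
and any A, B ∈ ℝ, there exists a unique pair (ε₁, ε₃) with ε₃ − ε₁ = A and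
a₋·θ₁(ε₁) + a₊·θ₃(ε₃) = B. -/
theorem statement0 (aminus aplus : ℝ) (haminus : 0 < aminus) (haplus : 0 < aplus)
    (A B : ℝ) (θ₁ θ₃ : ℝ → ℝ)
    (hθ₁ : θ₁ = id ∨ θ₁ = hFun) (hθ₃ : θ₃ = id ∨ θ₃ = hFun) :
    ∃! p : ℝ × ℝ, p.2 - p.1 = A ∧ aminus * θ₁ p.1 + aplus * θ₃ p.2 = B := by
  have θprops : ∀ θ : ℝ → ℝ, (θ = id ∨ θ = hFun) →
      StrictMono θ ∧ Continuous θ ∧ Filter.Tendsto θ Filter.atTop Filter.atTop ∧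
        Filter.Tendsto θ Filter.atBot Filter.atBot := by
    rintro θ (rfl | rfl)
    · exact ⟨strictMono_id, continuous_id, Filter.tendsto_id, Filter.tendsto_id⟩
    · exact ⟨hFun_strictMono, hFun_continuous, hFun_atTop, hFun_atBot⟩
  obtain ⟨m1, c1, t1, b1⟩ := θprops θ₁ hθ₁
  obtain ⟨m3, c3, t3, b3⟩ := θprops θ₃ hθ₃
  set F : ℝ → ℝ := fun x => aminus * θ₁ x + aplus * θ₃ (x + A) with hF
  have Fmono : StrictMono F := fun a b hab => by
    have h1 := m1 hab
    have h3 := m3 (show a + A < b + A by linarith)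
    have := mul_lt_mul_of_pos_left h1 haminus
    have := mul_lt_mul_of_pos_left h3 haplus
    simp only [hF]; linarith
  have Fcont : Continuous F := by
    apply Continuous.add
    · exact continuous_const.mul c1
    · exact continuous_const.mul (c3.comp (continuous_id.add continuous_const))
  have shift_top : Filter.Tendsto (fun x : ℝ => θ₃ (x + A)) Filter.atTop Filter.atTop :=
    t3.comp (Filter.tendsto_atTop_add_const_right _ A Filter.tendsto_id)
  have shift_bot : Filter.Tendsto (fun x : ℝ => θ₃ (x + A)) Filter.atBot Filter.atBot :=
    b3.comp (Filter.tendsto_atBot_add_const_right _ A Filter.tendsto_id)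
  have Ftop : Filter.Tendsto F Filter.atTop Filter.atTop :=
    Filter.Tendsto.atTop_add_atTop (t1.const_mul_atTop haminus) (shift_top.const_mul_atTop haplus)
  have Fbot : Filter.Tendsto F Filter.atBot Filter.atBot :=
    Filter.Tendsto.atBot_add_atBot (b1.const_mul_atBot haminus) (shift_bot.const_mul_atBot haplus)
  have Fsurj : Function.Surjective F := Continuous.surjective Fcont Ftop Fbot
  obtain ⟨x, hx⟩ := Fsurj B
  refine ⟨(x, x + A), ⟨by ring, hx⟩, ?_⟩
  rintro ⟨p1, p2⟩ ⟨hA, hB⟩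
  have hp2 : p2 = p1 + A := by simpa using by linarith [hA]
  have : F p1 = B := by rw [hF]; simpa [← hp2] using hB
  have : p1 = x := Fmono.injective (this.trans hx.symm)
  subst this; simp [hp2]
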